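/- arXiv:2603.05694 — 2 statements merged into one kernel-verified Lean document; each statement's English description precedes it below -/
import Mathlib

section
/- With the SSM construction of the Moore machine (A = I, B with columns e_{T(s,σ)} − e_s, C with C_{λ,s} = [G(s)=λ], initial state x₀ = e_{s₀}, and inputs μ_t = e_{(q_t, σ_{t+1})}), the output y_t = C x_t equals the one-hot encoding of the Moore machine output G(q_t) for every t, i.e., the SSM exactly reproduces the input-output behavior of the Moore machine on every finite input word. -/
def mooreB {S Γ : Type*} [Fintype S] [Fintype Γ] [DecidableEq S] [DecidableEq Γ]
    (T : S × Γ → S) : Matrix S (S × Γ) ℝ :=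
  Matrix.of fun s'' p => (Pi.single (T p) 1 - Pi.single p.1 1 : S → ℝ) s''

def mooreC {S Λ : Type*} [Fintype S] [Fintype Λ] [DecidableEq S] [DecidableEq Λ]
    (G : S → Λ) : Matrix Λ S ℝ :=
  Matrix.of fun l s => if G s = l then (1 : ℝ) else 0

def Tstar {S Γ : Type*} (T : S × Γ → S) (s : S) (w : List Γ) : S :=
  w.foldl (fun q σ => T (q, σ)) s

lemma mulVec_single_one {R m n : Type*} [Fintype n] [DecidableEq n] [NonAssocSemiring R]
    (M : Matrix m n R) (j : n) : M.mulVec (Pi.single j 1) = fun i => M i j := by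
  funext i
  rw [Matrix.mulVec_single]
  simp

lemma Tstar_take_succ {S Γ : Type*} (T : S × Γ → S) (s₀ : S) (w : List Γ)
    (t : ℕ) (h : t < w.length) :
    Tstar T s₀ (w.take (t + 1)) = T (Tstar T s₀ (w.take t), w.get ⟨t, h⟩) := by
  rw [Tstar, List.take_succ, List.foldl_append, List.getElem?_eq_getElem h]
  rfl

/-- The SSM output `y_t = C x_t` equals the one-hot encoding of the Moore output
`G(q_t)` at every step `t` of every finite input word. -/
theorem stmt_3 {S Γ Λ : Type*} [Fintype S] [Fintype Γ] [Fintype Λ]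
    [DecidableEq S] [DecidableEq Γ] [DecidableEq Λ]
    (T : S × Γ → S) (G : S → Λ) (s₀ : S) (w : List Γ) (x : ℕ → (S → ℝ))
    (hx0 : x 0 = Pi.single s₀ 1)
    (hstep : ∀ t (h : t < w.length),
      x (t + 1) = (1 : Matrix S S ℝ).mulVec (x t)
        + (mooreB T).mulVec (Pi.single (Tstar T s₀ (w.take t), w.get ⟨t, h⟩) 1)) :
    ∀ t ≤ w.length,
      (mooreC G).mulVec (x t) = Pi.single (G (Tstar T s₀ (w.take t))) 1 := by
  have hx : ∀ t ≤ w.length, x t = Pi.single (Tstar T s₀ (w.take t)) 1 := by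
    intro t
    induction t with
    | zero => intro _; simpa [Tstar] using hx0
    | succ n ih =>
      intro hn
      have hlt : n < w.length := Nat.lt_of_succ_le hn
      rw [hstep n hlt, ih hlt.le, Matrix.one_mulVec, mulVec_single_one,
        Tstar_take_succ T s₀ w n hlt]
      funext s
      simp [mooreB, Pi.single_apply]
  intro t ht
  rw [hx t ht, mulVec_single_one]
  funext l
  simp [mooreC, Pi.single_apply, eq_comm]
end

section
/- In the Moore-SSM with A = I, the state trajectory starting from any one-hot vector e_{s₀} and driven by consistent inputs μ_t = e_{(q_t, σ_{t+1})} remains in the set of one-hot vectors {e_s : s ∈ S} for all time steps; in particular every reachable SSM state vector has exactly one coordinate equal to 1 and all others 0. -/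
lemma mooreB_mulVec_single {S Γ : Type*} [Fintype S] [Fintype Γ] [DecidableEq S] [DecidableEq Γ]
    (T : S × Γ → S) (p : S × Γ) :
    (mooreB T).mulVec (Pi.single p 1) =
      (Pi.single (T p) 1 - Pi.single p.1 1 : S → ℝ) := by
  funext i
  simp [Matrix.mulVec, dotProduct, mooreB, Pi.single_apply,
    Finset.sum_ite_eq', mul_comm]

/-- The SSM trajectory started at a one-hot vector and driven by consistent inputs
remains in the set of one-hot vectors: at every step there is exactly one
coordinate equal to `1` and all others are `0`. -/
theorem stmt_8 {S Γ : Type*} [Fintype S] [Fintype Γ] [DecidableEq S] [DecidableEq Γ]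
    (T : S × Γ → S) (s₀ : S) (w : List Γ) (x : ℕ → (S → ℝ))
    (hx0 : x 0 = Pi.single s₀ 1)
    (hstep : ∀ t (h : t < w.length),
      x (t + 1) = x t
        + (mooreB T).mulVec (Pi.single (Tstar T s₀ (w.take t), w.get ⟨t, h⟩) 1)) :
    ∀ t ≤ w.length, ∃ s : S, x t = Pi.single s 1 := by
  have key : ∀ t ≤ w.length, x t = Pi.single (Tstar T s₀ (w.take t)) 1 := by
    intro t
    induction t with
    | zero => intro _; simpa [Tstar] using hx0
    | succ n ih =>
      intro hlen
      have hn : n < w.length := by omega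
      have ihn := ih (le_of_lt hn)
      rw [hstep n hn, ihn, mooreB_mulVec_single]
      have htake : w.take (n + 1) = w.take n ++ [w.get ⟨n, hn⟩] := by
        rw [List.take_succ, List.getElem?_eq_getElem hn]; rfl
      simp only [Tstar, htake, List.foldl_append, List.foldl_cons, List.foldl_nil]
      abel
  intro t ht
  exact ⟨_, key t ht⟩
end
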